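/- Let G = (V,E) be a finite graph of maximum degree at most Δ, and suppose complex edge weights ω and vertex weights υ satisfy |1 - e^{±ω_e}| ≤ δ_{Δ+1} for all e ∈ E and |1 - e^{±υ_v}| ≤ δ_{Δ+1} for all v ∈ V (both signs). Then the Ising model partition function does not vanish: Z_Ising(G;ω,υ) = Σ_{σ∈{-1,+1}^V} exp(Σ_{{u,v}∈E} ω_{uv}σ_uσ_v + Σ_v υ_vσ_v) ≠ 0. (This may be derived from the nonvanishing of the restricted multivariate graph homomorphism partition function on graphs of maximum degree at most Δ+1 with matrix entries within distance δ_{Δ+1} of 1, via the gadget reduction with a^e_{ij} = e^{ω_e(2i-3)(2j-3)} and b^{e_v}_{ij} = e^{υ_v(2i-3)(2j-3)}.) -/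

import Mathlib

open scoped BigOperators

/-- The constant `δ_Δ = sup_{0 < α < 2π/(3Δ)} sin(α/2) cos(αΔ/2)`. -/
noncomputable def deltaDelta (Δ : ℕ) : ℝ :=
  sSup ((fun α : ℝ => Real.sin (α / 2) * Real.cos (α * Δ / 2)) ''
    Set.Ioo 0 (2 * Real.pi / (3 * Δ)))

/-- Spin `2i-3 ∈ {-1,+1}` of a state `i ∈ {1,2}`, encoded on `Fin 2` (`0 ↦ -1`, `1 ↦ +1`). -/
noncomputable def spin (i : Fin 2) : ℂ := 2 * (i : ℕ) - 1

/-- Product of the spins of the endpoints of an unordered pair. -/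
noncomputable def spinPair (s : Sym2 (Fin 2)) : ℂ := if s.IsDiag then 1 else -1

/-- The Ising model partition function `Z_Ising(G;ω,υ)`. -/
noncomputable def isingZ (V : Type) [Fintype V] [DecidableEq V] (E : Finset (Sym2 V))
    (ω : Sym2 V → ℂ) (υ : V → ℂ) : ℂ :=
  ∑ σ : V → Fin 2,
    Complex.exp (∑ e ∈ E, ω e * spinPair (e.map σ) + ∑ v : V, υ v * spin (σ v))

/-- The (multivariate) graph homomorphism partition function restricted to maps sending
`S` to `k`, with symmetric `2 × 2` matrices encoded as functions on `Sym2 (Fin 2)`. -/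
noncomputable def homRestricted2 (W : Type) [Fintype W] [DecidableEq W]
    (E : Finset (Sym2 W)) (b : Sym2 W → Sym2 (Fin 2) → ℂ) (S : Finset W) (k : Fin 2) : ℂ :=
  ∑ φ ∈ Finset.univ.filter (fun φ : W → Fin 2 => ∀ s ∈ S, φ s = k),
    ∏ e ∈ E, b e (e.map φ)

/-- The gadget weight function on `Sym2 (V ⊕ V)`. -/
noncomputable def gadgetWeight (V : Type) (ω : Sym2 V → ℂ) (υ : V → ℂ) :
    Sym2 (V ⊕ V) → ℂ :=
  Sym2.lift ⟨fun a b => match a, b with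
    | .inl u, .inl w => ω s(u, w)
    | .inl _, .inr w => υ w
    | .inr u, .inl _ => υ u
    | .inr _, .inr _ => 0,
    by
      intro a b
      cases a <;> cases b <;> simp only []
      rw [Sym2.eq_swap]⟩

lemma gadgetWeight_inl (V : Type) (ω : Sym2 V → ℂ) (υ : V → ℂ) (e : Sym2 V) :
    gadgetWeight V ω υ (Sym2.map Sum.inl e) = ω e := by
  induction e using Sym2.ind with
  | _ u w => simp [gadgetWeight, Sym2.map_pair_eq]

lemma gadgetWeight_pendant (V : Type) (ω : Sym2 V → ℂ) (υ : V → ℂ) (v : V) :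
    gadgetWeight V ω υ s(Sum.inl v, Sum.inr v) = υ v := by
  simp [gadgetWeight]

lemma spinPair_eq_one_or_neg_one (s : Sym2 (Fin 2)) : spinPair s = 1 ∨ spinPair s = -1 := by
  unfold spinPair; split <;> simp

lemma spin_eq_spinPair (j : Fin 2) : spinPair s(j, (1 : Fin 2)) = spin j := by
  fin_cases j <;> simp [spinPair, spin, Sym2.mk_isDiag_iff] <;> norm_num

theorem ising_nonvanishing (V : Type) [Fintype V] [DecidableEq V] (Δ : ℕ)
    (E : Finset (Sym2 V))
    (hdeg : ∀ v : V, (E.filter (fun e => v ∈ e)).card ≤ Δ)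
    (ω : Sym2 V → ℂ) (υ : V → ℂ)
    (hω : ∀ e ∈ E, ‖1 - Complex.exp (ω e)‖ ≤ deltaDelta (Δ + 1) ∧
      ‖1 - Complex.exp (-(ω e))‖ ≤ deltaDelta (Δ + 1))
    (hυ : ∀ v : V, ‖1 - Complex.exp (υ v)‖ ≤ deltaDelta (Δ + 1) ∧
      ‖1 - Complex.exp (-(υ v))‖ ≤ deltaDelta (Δ + 1))
    (hB : ∀ (E' : Finset (Sym2 (V ⊕ V))) (b : Sym2 (V ⊕ V) → Sym2 (Fin 2) → ℂ)
        (S' : Finset (V ⊕ V)) (k : Fin 2),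
      (∀ w : V ⊕ V, (E'.filter (fun e => w ∈ e)).card ≤ Δ + 1) →
      (∀ e ∈ E', ∀ s : Sym2 (Fin 2), ‖1 - b e s‖ ≤ deltaDelta (Δ + 1)) →
      homRestricted2 (V ⊕ V) E' b S' k ≠ 0) :
    isingZ V E ω υ ≠ 0 := by
  classical
  set g : Sym2 V → Sym2 (V ⊕ V) := Sym2.map Sum.inl with hg
  have hginj : Function.Injective g := Sym2.map.injective Sum.inl_injective
  set p : V → Sym2 (V ⊕ V) := fun v => s(Sum.inl v, Sum.inr v) with hp
  have hpinj : Function.Injective p := by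
    intro u v h
    simp only [hp, Sym2.eq_iff] at h
    rcases h with ⟨h1, _⟩ | ⟨h1, _⟩
    · exact Sum.inl_injective h1
    · exact (Sum.inl_ne_inr h1).elim
  set A : Finset (Sym2 (V ⊕ V)) := E.image g with hA
  set B : Finset (Sym2 (V ⊕ V)) := Finset.univ.image p with hB'
  have hmemA : ∀ x ∈ A, ∃ e ∈ E, x = g e := by
    intro x hx; rcases Finset.mem_image.mp hx with ⟨e, he, rfl⟩; exact ⟨e, he, rfl⟩
  have hmemB : ∀ x ∈ B, ∃ v, x = p v := by
    intro x hx; rcases Finset.mem_image.mp hx with ⟨v, _, rfl⟩; exact ⟨v, rfl⟩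
  have hdisj : Disjoint A B := by
    rw [Finset.disjoint_left]
    intro x hxA hxB
    rcases hmemA x hxA with ⟨e, _, rfl⟩
    rcases hmemB _ hxB with ⟨v, hv⟩
    have : Sum.inr v ∈ g e := by rw [hv, hp]; simp
    rw [hg, Sym2.mem_map] at this
    rcases this with ⟨a, _, ha⟩
    exact Sum.inl_ne_inr ha
  set E' : Finset (Sym2 (V ⊕ V)) := A ∪ B with hE'
  set b : Sym2 (V ⊕ V) → Sym2 (Fin 2) → ℂ :=
    fun e s => Complex.exp (gadgetWeight V ω υ e * spinPair s) with hb
  set S' : Finset (V ⊕ V) := Finset.univ.image Sum.inr with hS'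
  -- degree bound
  have hdeg' : ∀ w : V ⊕ V, (E'.filter (fun e => w ∈ e)).card ≤ Δ + 1 := by
    intro w
    rw [hE', Finset.filter_union]
    refine le_trans (Finset.card_union_le _ _) ?_
    have hBcard : (B.filter (fun e => w ∈ e)).card ≤ 1 := by
      have hsub : B.filter (fun e => w ∈ e) ⊆ {p (Sum.elim id id w)} := by
        intro x hx
        rw [Finset.mem_filter] at hx
        rcases hmemB x hx.1 with ⟨u, rfl⟩
        have h2 : w = Sum.inl u ∨ w = Sum.inr u := by
          simpa [hp, Sym2.mem_iff] using hx.2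
        rcases h2 with rfl | rfl <;> simp
      simpa using Finset.card_le_card hsub
    rcases w with v | v
    · have hAcard : (A.filter (fun e => Sum.inl v ∈ e)).card ≤ Δ := by
        rw [hA, Finset.filter_image]
        refine le_trans (Finset.card_image_le) ?_
        refine le_trans (le_of_eq (congrArg Finset.card ?_)) (hdeg v)
        apply Finset.filter_congr
        intro e _
        simp only [hg, Sym2.mem_map]
        constructor
        · rintro ⟨a, ha, h⟩; rwa [← Sum.inl_injective h]
        · intro h; exact ⟨v, h, rfl⟩
      omega
    · have hAcard : (A.filter (fun e => Sum.inr v ∈ e)).card = 0 := by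
        rw [Finset.card_eq_zero, Finset.filter_eq_empty_iff]
        intro x hx hmem
        rcases hmemA x hx with ⟨e, _, rfl⟩
        rw [hg, Sym2.mem_map] at hmem
        rcases hmem with ⟨a, _, ha⟩
        exact Sum.inl_ne_inr ha
      omega
  -- entry bound
  have hent : ∀ e ∈ E', ∀ s : Sym2 (Fin 2),
      ‖1 - b e s‖ ≤ deltaDelta (Δ + 1) := by
    intro e he s
    have key : ∀ c : ℂ, ‖1 - Complex.exp c‖ ≤ deltaDelta (Δ + 1) →
        ‖1 - Complex.exp (-c)‖ ≤ deltaDelta (Δ + 1) →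
        ‖1 - Complex.exp (c * spinPair s)‖ ≤ deltaDelta (Δ + 1) := by
      intro c h1 h2
      rcases spinPair_eq_one_or_neg_one s with h | h <;> rw [h]
      · rwa [mul_one]
      · rwa [mul_neg_one]
    rw [hE', Finset.mem_union] at he
    rcases he with he | he
    · rcases hmemA e he with ⟨e0, he0, rfl⟩
      rw [hb]
      simp only [hg, gadgetWeight_inl]
      exact key _ (hω e0 he0).1 (hω e0 he0).2
    · rcases hmemB e he with ⟨v, rfl⟩
      rw [hb]
      simp only [hp, gadgetWeight_pendant]
      exact key _ (hυ v).1 (hυ v).2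
  have hne := hB E' b S' 1 hdeg' hent
  -- the identification
  have hiso : isingZ V E ω υ = homRestricted2 (V ⊕ V) E' b S' 1 := by
    rw [isingZ, homRestricted2]
    refine Finset.sum_nbij' (fun σ => Sum.elim σ (fun _ => 1))
      (fun φ => φ ∘ Sum.inl) ?_ ?_ ?_ ?_ ?_
    · intro σ _
      rw [Finset.mem_filter]
      refine ⟨Finset.mem_univ _, ?_⟩
      intro s hs
      rw [hS', Finset.mem_image] at hs
      rcases hs with ⟨v, _, rfl⟩
      rfl
    · intro φ _; exact Finset.mem_univ _
    · intro σ _; rfl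
    · intro φ hφ
      rw [Finset.mem_filter] at hφ
      funext w
      rcases w with v | v
      · rfl
      · exact (hφ.2 (Sum.inr v) (by rw [hS']; exact Finset.mem_image_of_mem _ (Finset.mem_univ v))).symm
    · intro σ _
      rw [hE', Finset.prod_union hdisj, hA, Finset.prod_image (fun x _ y _ h => hginj h),
        hB', Finset.prod_image (fun x _ y _ h => hpinj h)]
      have h1 : ∀ e ∈ E, b (g e) ((g e).map (Sum.elim σ fun _ => 1)) =
          Complex.exp (ω e * spinPair (e.map σ)) := by
        intro e _
        rw [hb]
        simp only [hg, gadgetWeight_inl, Sym2.map_map]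
        congr 2
      have h2 : ∀ v : V, b (p v) ((p v).map (Sum.elim σ fun _ => 1)) =
          Complex.exp (υ v * spin (σ v)) := by
        intro v
        rw [hb]
        simp only [hp, gadgetWeight_pendant, Sym2.map_pair_eq]
        rw [show (Sum.elim σ fun _ => (1 : Fin 2)) (Sum.inl v) = σ v from rfl,
          show (Sum.elim σ fun _ => (1 : Fin 2)) (Sum.inr v) = 1 from rfl,
          spin_eq_spinPair]
      rw [Finset.prod_congr rfl h1, Finset.prod_congr rfl (fun v _ => h2 v),
        ← Complex.exp_sum, ← Complex.exp_sum, ← Complex.exp_add]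
  rw [hiso]
  exact hne
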